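/- The poset algebra A_𝒫 has local units: for any finite family P_1, …, P_n of basis elements, the element u = Σ_{x ∈ S} {x}, where S = {0_{P_1}, …, 0_{P_n}}, satisfies u * a = a for every a in the span of P_1, …, P_n, and the element v = Σ_{y ∈ T} {y}, where T = {1_{P_1}, …, 1_{P_n}}, satisfies a * v = a for every such a. Consequently the product of A_𝒫 is non-degenerate. -/

import Mathlib

variable (L : Type*) [PartialOrder L]

/-- A finite subposet of `L` possessing a greatest and a least element. -/
structure SubPoset where
  carrier : Finset L
  top : L
  bot : L
  top_mem : top ∈ carrier
  bot_mem : bot ∈ carrier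
  le_top : ∀ x ∈ carrier, x ≤ top
  bot_le : ∀ x ∈ carrier, bot ≤ x

variable {L} [DecidableEq L]

/-- The union `P ∪ Q`, when `1_P = 0_Q`, as an element of `𝒫`. -/
def SubPoset.union (P Q : SubPoset L) (h : P.top = Q.bot) : SubPoset L where
  carrier := P.carrier ∪ Q.carrier
  top := Q.top
  bot := P.bot
  top_mem := Finset.mem_union_right _ Q.top_mem
  bot_mem := Finset.mem_union_left _ P.bot_mem
  le_top := fun x hx => by
    rcases Finset.mem_union.mp hx with h1 | h1
    · exact le_trans (P.le_top x h1) (h ▸ Q.bot_le Q.top Q.top_mem)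
    · exact Q.le_top x h1
  bot_le := fun x hx => by
    rcases Finset.mem_union.mp hx with h1 | h1
    · exact P.bot_le x h1
    · exact le_trans (h ▸ P.bot_le P.top P.top_mem) (Q.bot_le x h1)

variable (k : Type*) [Field k]

/-- Product of two basis elements of the poset algebra `A_𝒫`. -/
noncomputable def mulBasis (P Q : SubPoset L) : SubPoset L →₀ k :=
  if h : P.top = Q.bot then Finsupp.single (P.union Q h) 1 else 0

/-- The bilinear product of the poset algebra `A_𝒫`. -/
noncomputable def mulA (f g : SubPoset L →₀ k) : SubPoset L →₀ k :=
  f.sum fun P a => g.sum fun Q b => (a * b) • mulBasis k P Q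

/-- The one-element subposet `{x}`. -/
def singl (x : L) : SubPoset L :=
  ⟨{x}, x, x, Finset.mem_singleton_self x, Finset.mem_singleton_self x,
    fun y hy => le_of_eq (Finset.mem_singleton.mp hy),
    fun y hy => ge_of_eq (Finset.mem_singleton.mp hy)⟩


lemma SubPoset.ext' {P Q : SubPoset L} (hc : P.carrier = Q.carrier)
    (ht : P.top = Q.top) (hb : P.bot = Q.bot) : P = Q := by
  cases P; cases Q; simp_all

lemma singl_union (P : SubPoset L) (h : (singl P.bot).top = P.bot) :
    (singl P.bot).union P h = P :=
  SubPoset.ext' (by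
    show {P.bot} ∪ P.carrier = P.carrier
    rw [Finset.union_eq_right.mpr (by simp [P.bot_mem])]) rfl rfl

lemma union_singl (P : SubPoset L) (h : P.top = (singl P.top).bot) :
    P.union (singl P.top) h = P :=
  SubPoset.ext' (by
    show P.carrier ∪ {P.top} = P.carrier
    rw [Finset.union_eq_left.mpr (by simp [P.top_mem])]) rfl rfl

lemma mulA_single_single (P Q : SubPoset L) (a b : k) :
    mulA k (Finsupp.single P a) (Finsupp.single Q b) = (a * b) • mulBasis k P Q := by
  unfold mulA
  rw [Finsupp.sum_single_index (by simp), Finsupp.sum_single_index (by simp)]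

lemma mulA_zero_left (g : SubPoset L →₀ k) : mulA k 0 g = 0 := by
  simp [mulA]

lemma mulA_zero_right (f : SubPoset L →₀ k) : mulA k f 0 = 0 := by
  simp [mulA]

lemma mulA_add_left (f f' g : SubPoset L →₀ k) :
    mulA k (f + f') g = mulA k f g + mulA k f' g := by
  classical
  unfold mulA
  rw [Finsupp.sum_add_index (by simp) (by intros; rw [← Finsupp.sum_add]; congr 1; ext Q b; rw [add_mul, add_smul])]

lemma mulA_add_right (f g g' : SubPoset L →₀ k) :
    mulA k f (g + g') = mulA k f g + mulA k f g' := by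
  classical
  unfold mulA
  rw [← Finsupp.sum_add]
  congr 1; ext P a
  rw [Finsupp.sum_add_index (by simp) (by intros; rw [mul_add, add_smul])]

lemma mulA_smul_right (c : k) (f g : SubPoset L →₀ k) :
    mulA k f (c • g) = c • mulA k f g := by
  unfold mulA
  rw [Finsupp.smul_sum]
  refine Finsupp.sum_congr fun P _ => ?_
  rw [Finsupp.sum_smul_index (by simp), Finsupp.smul_sum]
  exact Finsupp.sum_congr fun Q _ => by rw [smul_smul, mul_left_comm]

lemma mulA_sum_left {ι : Type*} (s : Finset ι) (h : ι → (SubPoset L →₀ k)) (g : SubPoset L →₀ k) :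
    mulA k (∑ i ∈ s, h i) g = ∑ i ∈ s, mulA k (h i) g := by
  classical
  induction s using Finset.induction with
  | empty => simp [mulA_zero_left]
  | insert _ _ hx ih => simp [Finset.sum_insert hx, mulA_add_left, ih]

lemma mulA_sum_right {ι : Type*} (s : Finset ι) (f : SubPoset L →₀ k) (h : ι → (SubPoset L →₀ k)) :
    mulA k f (∑ i ∈ s, h i) = ∑ i ∈ s, mulA k f (h i) := by
  classical
  induction s using Finset.induction with
  | empty => simp [mulA_zero_right]
  | insert _ _ hx ih => simp [Finset.sum_insert hx, mulA_add_right, ih]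

lemma mulBasis_singl_left (x : L) (P : SubPoset L) :
    mulBasis k (singl x) P = if x = P.bot then Finsupp.single P (1 : k) else 0 := by
  classical
  unfold mulBasis
  split_ifs with h h' h'
  · subst h'; rw [singl_union]
  · exact absurd h h'
  · exact absurd h' h
  · rfl

lemma mulBasis_singl_right (P : SubPoset L) (y : L) :
    mulBasis k P (singl y) = if P.top = y then Finsupp.single P (1 : k) else 0 := by
  classical
  unfold mulBasis
  split_ifs with h h' h'
  · subst h'; rw [union_singl]
  · exact absurd h h'
  · exact absurd h' h
  · rfl

lemma mulA_singl_right_apply (f : SubPoset L →₀ k) (y : L) (R : SubPoset L) :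
    mulA k f (Finsupp.single (singl y) 1) R = if R.top = y then f R else 0 := by
  classical
  unfold mulA
  rw [Finsupp.sum_apply]
  rw [Finsupp.sum_congr (g2 := fun P a => if P = R then (if P.top = y then a else 0) else 0)]
  · rw [Finsupp.sum_ite_eq' f R fun P a => if P.top = y then a else 0]
    split_ifs <;> simp_all [Finsupp.notMem_support_iff]
  · intro P _
    rw [Finsupp.sum_single_index (by simp)]
    rw [mul_one, mulBasis_singl_right]
    split_ifs <;> simp_all [Finsupp.single_apply]

lemma mulA_singl_left_apply (g : SubPoset L →₀ k) (x : L) (R : SubPoset L) :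
    mulA k (Finsupp.single (singl x) 1) g R = if x = R.bot then g R else 0 := by
  classical
  unfold mulA
  rw [Finsupp.sum_single_index (by simp)]
  rw [Finsupp.sum_apply]
  rw [Finsupp.sum_congr (g2 := fun Q b => if Q = R then (if x = Q.bot then b else 0) else 0)]
  · rw [Finsupp.sum_ite_eq' g R fun Q b => if x = Q.bot then b else 0]
    split_ifs <;> simp_all [Finsupp.notMem_support_iff]
  · intro Q _
    rw [one_mul, mulBasis_singl_left]
    split_ifs <;> simp_all [Finsupp.single_apply]

lemma mulA_smul_left (c : k) (f g : SubPoset L →₀ k) :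
    mulA k (c • f) g = c • mulA k f g := by
  unfold mulA
  rw [Finsupp.sum_smul_index (by simp), Finsupp.smul_sum]
  refine Finsupp.sum_congr fun P _ => ?_
  rw [Finsupp.smul_sum]
  exact Finsupp.sum_congr fun Q _ => by rw [smul_smul, mul_assoc]

/-- `A_𝒫` has local units, and consequently its product is non-degenerate. -/
theorem posetAlgebra_local_units_and_nondegenerate :
    (∀ (n : ℕ) (P : Fin n → SubPoset L) (a : SubPoset L →₀ k),
      a ∈ Submodule.span k (Set.range fun i => Finsupp.single (P i) (1 : k)) →
      mulA k (∑ x ∈ Finset.image (fun i => (P i).bot) Finset.univ,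
          Finsupp.single (singl x) (1 : k)) a = a ∧
      mulA k a (∑ y ∈ Finset.image (fun i => (P i).top) Finset.univ,
          Finsupp.single (singl y) (1 : k)) = a) ∧
    (∀ f : SubPoset L →₀ k, (∀ g : SubPoset L →₀ k, mulA k f g = 0) → f = 0) ∧
    (∀ g : SubPoset L →₀ k, (∀ f : SubPoset L →₀ k, mulA k f g = 0) → g = 0) := by
  classical
  refine ⟨?_, ?_, ?_⟩
  · intro n P a ha
    induction ha using Submodule.span_induction with
    | mem x hx =>
      obtain ⟨i, rfl⟩ := hx
      constructor
      · rw [mulA_sum_left]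
        have : ∀ x ∈ Finset.image (fun i => (P i).bot) Finset.univ,
            mulA k (Finsupp.single (singl x) (1 : k)) (Finsupp.single (P i) (1 : k)) =
            if x = (P i).bot then Finsupp.single (P i) (1 : k) else 0 := by
          intro x _
          rw [mulA_single_single, mulBasis_singl_left, one_mul, one_smul]
        rw [Finset.sum_congr rfl this, Finset.sum_ite_eq' _ ((P i).bot) _]
        rw [if_pos (Finset.mem_image.mpr ⟨i, Finset.mem_univ i, rfl⟩)]
      · rw [mulA_sum_right]
        have : ∀ y ∈ Finset.image (fun i => (P i).top) Finset.univ,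
            mulA k (Finsupp.single (P i) (1 : k)) (Finsupp.single (singl y) (1 : k)) =
            if (P i).top = y then Finsupp.single (P i) (1 : k) else 0 := by
          intro y _
          rw [mulA_single_single, mulBasis_singl_right, one_mul, one_smul]
        rw [Finset.sum_congr rfl this]
        rw [Finset.sum_ite_eq _ ((P i).top) _]
        rw [if_pos (Finset.mem_image.mpr ⟨i, Finset.mem_univ i, rfl⟩)]
    | zero => simp [mulA_zero_left, mulA_zero_right]
    | add x y hx hy ihx ihy =>
      exact ⟨by rw [mulA_add_right, ihx.1, ihy.1], by rw [mulA_add_left, ihx.2, ihy.2]⟩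
    | smul c x hx ih =>
      exact ⟨by rw [mulA_smul_right, ih.1], by rw [mulA_smul_left, ih.2]⟩
  · intro f hf
    ext R
    have := hf (Finsupp.single (singl R.top) 1)
    have h2 := mulA_singl_right_apply k f R.top R
    rw [this] at h2
    simpa using h2.symm
  · intro g hg
    ext R
    have := hg (Finsupp.single (singl R.bot) 1)
    have h2 := mulA_singl_left_apply k g R.bot R
    rw [this] at h2
    simpa using h2.symm
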